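/- Let ρ₁ := (1/4)(I⊗I) + (1/12)(I⊗Y + I⊗Z − X⊗X + Y⊗X + Z⊗X). For every two-qubit Clifford unitary U, i.e. every 4×4 unitary U such that for all P₁,P₂ ∈ {I,X,Y,Z} there exist Q₁,Q₂ ∈ {I,X,Y,Z} and a scalar c ∈ ℂ with U(P₁⊗P₂)U† = c·(Q₁⊗Q₂), the 2×2 matrix N with entries N_{a,b} = (U ρ₁ U†)_{(a,0),(b,0)} for a,b ∈ {0,1} (i.e. the output of projecting the second qubit onto |0⟩ after applying U) satisfies |tr(NX)| + |tr(NY)| + |tr(NZ)| ≤ tr(N). That is, every two-to-one-qubit stabilizer reduction applied to ρ₁ outputs a nonnegative multiple of a mixture of single-qubit stabilizer states (a state in the octahedron |x|+|y|+|z| ≤ 1). -/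

import Mathlib

open Matrix Kronecker ComplexOrder

noncomputable def Id2 : Matrix (Fin 2) (Fin 2) ℂ := 1
noncomputable def PX : Matrix (Fin 2) (Fin 2) ℂ := !![0, 1; 1, 0]
noncomputable def PY : Matrix (Fin 2) (Fin 2) ℂ := !![0, -Complex.I; Complex.I, 0]
noncomputable def PZ : Matrix (Fin 2) (Fin 2) ℂ := !![1, 0; 0, -1]

/-- The four Pauli matrices `I, X, Y, Z`. -/
noncomputable def Pauli : Fin 4 → Matrix (Fin 2) (Fin 2) ℂ := ![Id2, PX, PY, PZ]

/-- The two-qubit state `ρ₁ = (1/4)I⊗I + (1/12)(I⊗Y + I⊗Z − X⊗X + Y⊗X + Z⊗X)`. -/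
noncomputable def rho1 : Matrix (Fin 2 × Fin 2) (Fin 2 × Fin 2) ℂ :=
  (1 / 4 : ℂ) • (Id2 ⊗ₖ Id2) +
    (1 / 12 : ℂ) • (Id2 ⊗ₖ PY + Id2 ⊗ₖ PZ - PX ⊗ₖ PX + PY ⊗ₖ PX + PZ ⊗ₖ PX)

/- Auxiliary definitions: the indices of the five Pauli terms of `ρ₁` and their signs,
and the entry/trace profiles of the four Pauli matrices. -/
def qa : Fin 5 → Fin 4 := ![0, 0, 1, 2, 3]
def qb : Fin 5 → Fin 4 := ![2, 3, 1, 1, 1]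
def sv : Fin 5 → ℝ := ![1, 1, -1, 1, 1]
def betaFn : Fin 4 → ℝ := ![1, 0, 0, 1]
def xFn : Fin 4 → ℝ := ![0, 2, 0, 0]
def yFn : Fin 4 → ℝ := ![0, 0, 2, 0]
def zFn : Fin 4 → ℝ := ![0, 0, 0, 2]
def tFn : Fin 4 → ℝ := ![2, 0, 0, 0]

lemma lB (x : Fin 4) : Pauli x 0 0 = ((betaFn x : ℝ) : ℂ) := by
  fin_cases x <;> simp [Pauli, Id2, PX, PY, PZ, betaFn, Matrix.one_apply]

lemma ltX (x : Fin 4) : (Pauli x * PX).trace = ((xFn x : ℝ) : ℂ) := by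
  fin_cases x <;>
    simp [Pauli, Id2, PX, PY, PZ, xFn, Matrix.trace_fin_two, Matrix.mul_fin_two, Matrix.mul_apply,
      Fin.sum_univ_two, Matrix.one_apply] <;> norm_num

lemma ltY (x : Fin 4) : (Pauli x * PY).trace = ((yFn x : ℝ) : ℂ) := by
  fin_cases x <;>
    simp [Pauli, Id2, PX, PY, PZ, yFn, Matrix.trace_fin_two, Matrix.mul_fin_two, Matrix.mul_apply,
      Fin.sum_univ_two, Matrix.one_apply, Complex.I_mul_I] <;> ring_nf

lemma ltZ (x : Fin 4) : (Pauli x * PZ).trace = ((zFn x : ℝ) : ℂ) := by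
  fin_cases x <;>
    simp [Pauli, Id2, PX, PY, PZ, zFn, Matrix.trace_fin_two, Matrix.mul_fin_two, Matrix.mul_apply,
      Fin.sum_univ_two, Matrix.one_apply] <;> norm_num

lemma ltI (x : Fin 4) : (Pauli x).trace = ((tFn x : ℝ) : ℂ) := by
  fin_cases x <;>
    simp [Pauli, Id2, PX, PY, PZ, tFn, Matrix.trace_fin_two, Matrix.trace_one, Matrix.one_apply]

lemma pauli_sq (x : Fin 4) : Pauli x * Pauli x = 1 := by
  fin_cases x <;>
    simp [Pauli, Id2, PX, PY, PZ, Matrix.mul_fin_two] <;>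
    ext i j <;> fin_cases i <;> fin_cases j <;> simp [Complex.I_mul_I]

lemma pauli_comm (x y : Fin 4) (h : x = y ∨ x = 0 ∨ y = 0) :
    Pauli x * Pauli y = Pauli y * Pauli x := by
  rcases h with h | h | h <;> subst h
  · rfl
  · show Pauli 0 * _ = _ * Pauli 0
    simp [Pauli, Id2]
  · show _ * Pauli 0 = Pauli 0 * _
    simp [Pauli, Id2]

lemma pauli_anticomm (x y : Fin 4) (hx : x ≠ 0) (hy : y ≠ 0) (hxy : x ≠ y) :
    Pauli x * Pauli y = -(Pauli y * Pauli x) := by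
  fin_cases x <;> fin_cases y <;> simp_all <;>
    · ext i j
      fin_cases i <;> fin_cases j <;>
        simp [Pauli, PX, PY, PZ, Matrix.mul_fin_two, Complex.I_mul_I]

lemma kron_neg (M N : Matrix (Fin 2) (Fin 2) ℂ) : M ⊗ₖ (-N) = -(M ⊗ₖ N) := by
  rw [← neg_one_smul ℂ N, Matrix.kronecker_smul, neg_one_smul]

lemma neg_kron (M N : Matrix (Fin 2) (Fin 2) ℂ) : (-M) ⊗ₖ N = -(M ⊗ₖ N) := by
  rw [← neg_one_smul ℂ M, Matrix.smul_kronecker, neg_one_smul]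

lemma kron_anti1 (A B C D : Matrix (Fin 2) (Fin 2) ℂ) (hA : A * C = C * A)
    (hB : B * D = -(D * B)) : (A ⊗ₖ B) * (C ⊗ₖ D) = -((C ⊗ₖ D) * (A ⊗ₖ B)) := by
  rw [← Matrix.mul_kronecker_mul, ← Matrix.mul_kronecker_mul, hA, hB, kron_neg]

lemma kron_anti2 (A B C D : Matrix (Fin 2) (Fin 2) ℂ) (hA : A * C = -(C * A))
    (hB : B * D = D * B) : (A ⊗ₖ B) * (C ⊗ₖ D) = -((C ⊗ₖ D) * (A ⊗ₖ B)) := by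
  rw [← Matrix.mul_kronecker_mul, ← Matrix.mul_kronecker_mul, hA, hB, neg_kron]

/-- The five Pauli terms of `ρ₁` pairwise anticommute. -/
lemma Qanti (i j : Fin 5) (hij : i ≠ j) :
    (Pauli (qa i) ⊗ₖ Pauli (qb i)) * (Pauli (qa j) ⊗ₖ Pauli (qb j)) =
      -((Pauli (qa j) ⊗ₖ Pauli (qb j)) * (Pauli (qa i) ⊗ₖ Pauli (qb i))) := by
  fin_cases i <;> fin_cases j <;> first
    | exact absurd rfl hij
    | exact kron_anti1 _ _ _ _ (pauli_comm _ _ (by decide))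
        (pauli_anticomm _ _ (by decide) (by decide) (by decide))
    | exact kron_anti2 _ _ _ _
        (pauli_anticomm _ _ (by decide) (by decide) (by decide))
        (pauli_comm _ _ (by decide))

lemma kron_sq (x y : Fin 4) :
    (Pauli x ⊗ₖ Pauli y) * (Pauli x ⊗ₖ Pauli y) = 1 := by
  rw [← Matrix.mul_kronecker_mul, pauli_sq, pauli_sq, Matrix.one_kronecker_one]

lemma sum_single_abs (f : Fin 5 → ℝ) (hb : ∀ i, |f i| ≤ 1)
    (hp : ∀ i j, i ≠ j → f i ≠ 0 → f j ≠ 0 → False) : |∑ i, f i| ≤ 1 := by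
  by_cases h : ∀ i, f i = 0
  · simp [h]
  · push_neg at h
    obtain ⟨i, hi⟩ := h
    have hsum : ∑ j, f j = f i :=
      Finset.sum_eq_single_of_mem i (Finset.mem_univ i)
        (fun j _ hj => by_contra fun h => hp j i hj h hi)
    rw [hsum]; exact hb i

/-- The key combinatorial inequality. -/
lemma final_comb (a : Fin 5 → Fin 4) (e : Fin 5 → ℝ) (he : ∀ i, |e i| ≤ 1)
    (hP : ∀ i j, i ≠ j → e i ≠ 0 → e j ≠ 0 → (a i = a j ∨ a i = 0 ∨ a j = 0) → False) :
    |∑ i, (if a i = 1 then e i else 0)| + |∑ i, (if a i = 2 then e i else 0)| +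
      |∑ i, (if a i = 3 then e i else 0)| ≤ 3 + ∑ i, (if a i = 0 then e i else 0) := by
  by_cases hex : ∃ i, a i = 0 ∧ e i ≠ 0
  · obtain ⟨i, hai, hei⟩ := hex
    have hz : ∀ j, j ≠ i → e j = 0 := fun j hj =>
      by_contra fun h => hP j i hj h hei (Or.inr (Or.inr hai))
    have hS : ∀ k : Fin 4, k ≠ 0 → ∑ j, (if a j = k then e j else 0) = 0 := by
      intro k hk
      apply Finset.sum_eq_zero
      intro j _
      by_cases hji : j = i
      · subst hji; rw [hai]; simp [Ne.symm hk]
      · simp [hz j hji]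
    have hS0 : ∑ j, (if a j = 0 then e j else 0) = e i := by
      rw [Finset.sum_eq_single_of_mem i (Finset.mem_univ i)
        (fun j _ hj => by simp [hz j hj])]
      simp [hai]
    rw [hS 1 (by decide), hS 2 (by decide), hS 3 (by decide), hS0]
    have := abs_le.mp (he i)
    simp only [abs_zero]
    linarith
  · push_neg at hex
    have hS0 : ∑ j, (if a j = 0 then e j else 0) = 0 := Finset.sum_eq_zero fun j _ => by
      by_cases h : a j = 0
      · simp [h, hex j h]
      · simp [h]
    have hk : ∀ k : Fin 4, |∑ j, (if a j = k then e j else 0)| ≤ 1 := by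
      intro k
      apply sum_single_abs
      · intro i
        by_cases h : a i = k <;> simp [h, he i]
      · intro i j hij hi hj
        have hai : a i = k := by by_contra h; simp [h] at hi
        have haj : a j = k := by by_contra h; simp [h] at hj
        rw [if_pos hai] at hi
        rw [if_pos haj] at hj
        exact hP i j hij hi hj (Or.inl (hai.trans haj.symm))
    rw [hS0]
    have h1 := hk 1
    have h2 := hk 2
    have h3 := hk 3
    linarith

/-- Every two-to-one-qubit stabilizer reduction applied to `ρ₁` — i.e. conjugation by
a two-qubit Clifford unitary `U` followed by projecting the second qubit onto `|0⟩` —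
outputs a nonnegative multiple of a mixture of single-qubit stabilizer states:
`|tr(NX)| + |tr(NY)| + |tr(NZ)| ≤ tr(N)` where `N_{a,b} = (Uρ₁U†)_{(a,0),(b,0)}`. -/
theorem stmt_15 (U : Matrix (Fin 2 × Fin 2) (Fin 2 × Fin 2) ℂ)
    (hU : U * Uᴴ = 1) (hU' : Uᴴ * U = 1)
    (hClifford : ∀ p₁ p₂ : Fin 4, ∃ (q₁ q₂ : Fin 4) (c : ℂ),
      U * (Pauli p₁ ⊗ₖ Pauli p₂) * Uᴴ = c • (Pauli q₁ ⊗ₖ Pauli q₂)) :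
    let N : Matrix (Fin 2) (Fin 2) ℂ := fun a b => (U * rho1 * Uᴴ) (a, 0) (b, 0)
    ((‖(N * PX).trace‖ + ‖(N * PY).trace‖ +
        ‖(N * PZ).trace‖ : ℝ) : ℂ) ≤ N.trace := by
  intro N
  choose f1 f2 fc hC using hClifford
  set a : Fin 5 → Fin 4 := fun i => f1 (qa i) (qb i) with ha
  set b : Fin 5 → Fin 4 := fun i => f2 (qa i) (qb i) with hb
  set cc : Fin 5 → ℂ := fun i => fc (qa i) (qb i) with hcc
  have hC' : ∀ i : Fin 5, U * (Pauli (qa i) ⊗ₖ Pauli (qb i)) * Uᴴ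
      = cc i • (Pauli (a i) ⊗ₖ Pauli (b i)) := fun i => hC (qa i) (qb i)
  -- conjugation is multiplicative
  have conj_mul : ∀ M M' : Matrix (Fin 2 × Fin 2) (Fin 2 × Fin 2) ℂ,
      (U * M * Uᴴ) * (U * M' * Uᴴ) = U * (M * M') * Uᴴ := by
    intro M M'
    have cancel : ∀ X : Matrix (Fin 2 × Fin 2) (Fin 2 × Fin 2) ℂ,
        Uᴴ * (U * X) = X := fun X => by rw [← Matrix.mul_assoc, hU', Matrix.one_mul]
    simp only [Matrix.mul_assoc]
    rw [cancel]
  -- the scalars are ±1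
  have hc2 : ∀ i : Fin 5, cc i = 1 ∨ cc i = -1 := by
    intro i
    have hsq : (cc i • (Pauli (a i) ⊗ₖ Pauli (b i))) *
        (cc i • (Pauli (a i) ⊗ₖ Pauli (b i))) = 1 := by
      rw [← hC' i, conj_mul, kron_sq, Matrix.mul_one, hU]
    rw [smul_mul_assoc, mul_smul_comm, kron_sq, smul_smul] at hsq
    have := congrFun (congrFun hsq ((0 : Fin 2), (0 : Fin 2))) ((0 : Fin 2), (0 : Fin 2))
    simp [Matrix.smul_apply, Matrix.one_apply] at this
    exact mul_self_eq_one_iff.mp this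
  have hcne : ∀ i, cc i ≠ 0 := by
    intro i; rcases hc2 i with h | h <;> rw [h] <;> norm_num
  -- the image Paulis pairwise anticommute
  have hRanti : ∀ i j : Fin 5, i ≠ j →
      (Pauli (a i) ⊗ₖ Pauli (b i)) * (Pauli (a j) ⊗ₖ Pauli (b j)) =
        -((Pauli (a j) ⊗ₖ Pauli (b j)) * (Pauli (a i) ⊗ₖ Pauli (b i))) := by
    intro i j hij
    have h1 : (cc i • (Pauli (a i) ⊗ₖ Pauli (b i))) * (cc j • (Pauli (a j) ⊗ₖ Pauli (b j)))
        = -((cc j • (Pauli (a j) ⊗ₖ Pauli (b j))) * (cc i • (Pauli (a i) ⊗ₖ Pauli (b i)))) := by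
      rw [← hC' i, ← hC' j, conj_mul, conj_mul, Qanti i j hij]
      simp [Matrix.neg_mul, Matrix.mul_neg]
    rw [smul_mul_assoc, mul_smul_comm, smul_smul, smul_mul_assoc, mul_smul_comm, smul_smul,
      ← smul_neg] at h1
    rw [mul_comm (cc j) (cc i)] at h1
    exact smul_right_injective _ (mul_ne_zero (hcne i) (hcne j)) h1
  -- exclusion principle: no two image Paulis can commute
  have hexcl : ∀ i j : Fin 5, i ≠ j → (a i = a j ∨ a i = 0 ∨ a j = 0) →
      (b i = b j ∨ b i = 0 ∨ b j = 0) → False := by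
    intro i j hij hA hB
    have hcomm : (Pauli (a i) ⊗ₖ Pauli (b i)) * (Pauli (a j) ⊗ₖ Pauli (b j)) =
        (Pauli (a j) ⊗ₖ Pauli (b j)) * (Pauli (a i) ⊗ₖ Pauli (b i)) := by
      rw [← Matrix.mul_kronecker_mul, ← Matrix.mul_kronecker_mul,
        pauli_comm _ _ hA, pauli_comm _ _ hB]
    have h := hRanti i j hij
    rw [hcomm] at h
    have h0 : (Pauli (a j) ⊗ₖ Pauli (b j)) * (Pauli (a i) ⊗ₖ Pauli (b i)) = 0 := by
      have h2 : (2 : ℂ) • ((Pauli (a j) ⊗ₖ Pauli (b j)) * (Pauli (a i) ⊗ₖ Pauli (b i))) = 0 := by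
        rw [two_smul]
        nth_rewrite 1 [h]
        simp
      rcases smul_eq_zero.mp h2 with h | h
      · norm_num at h
      · exact h
    have h1 : ((Pauli (a j) ⊗ₖ Pauli (b j)) * (Pauli (a i) ⊗ₖ Pauli (b i))) *
        ((Pauli (a i) ⊗ₖ Pauli (b i)) * (Pauli (a j) ⊗ₖ Pauli (b j))) = 1 := by
      rw [Matrix.mul_assoc, ← Matrix.mul_assoc (Pauli (a i) ⊗ₖ Pauli (b i)), kron_sq,
        Matrix.one_mul, kron_sq]
    rw [h0, Matrix.zero_mul] at h1
    exact one_ne_zero h1.symm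
  -- real versions of the scalars
  have hsgE : ∀ i : Fin 5, ∃ s : ℝ, ((s : ℝ) : ℂ) = cc i ∧ (s = 1 ∨ s = -1) := by
    intro i
    rcases hc2 i with h | h
    · exact ⟨1, by simp [h], Or.inl rfl⟩
    · exact ⟨-1, by simp [h], Or.inr rfl⟩
  choose sg hsg hsgv using hsgE
  -- expansion of the conjugated state
  have hexp : U * rho1 * Uᴴ = (1 / 4 : ℂ) • 1 +
      (1 / 12 : ℂ) • ∑ i : Fin 5, ((sv i : ℂ) * cc i) • (Pauli (a i) ⊗ₖ Pauli (b i)) := by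
    have h0 := hC' 0
    have h1 := hC' 1
    have h2 := hC' 2
    have h3 := hC' 3
    have h4 := hC' 4
    rw [show Pauli (qa 0) = Id2 from rfl, show Pauli (qb 0) = PY from rfl] at h0
    rw [show Pauli (qa 1) = Id2 from rfl, show Pauli (qb 1) = PZ from rfl] at h1
    rw [show Pauli (qa 2) = PX from rfl, show Pauli (qb 2) = PX from rfl] at h2
    rw [show Pauli (qa 3) = PY from rfl, show Pauli (qb 3) = PX from rfl] at h3
    rw [show Pauli (qa 4) = PZ from rfl, show Pauli (qb 4) = PX from rfl] at h4
    have h11 : U * (Id2 ⊗ₖ Id2) * Uᴴ = 1 := by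
      rw [show Id2 ⊗ₖ Id2 = (1 : Matrix (Fin 2 × Fin 2) (Fin 2 × Fin 2) ℂ) from
        Matrix.one_kronecker_one, Matrix.mul_one, hU]
    rw [rho1]
    simp only [Matrix.add_mul, Matrix.mul_add, Matrix.sub_mul, Matrix.mul_sub,
      Matrix.smul_mul, Matrix.mul_smul]
    rw [h0, h1, h2, h3, h4, h11, Fin.sum_univ_five]
    simp only [sv, Matrix.cons_val_zero, Matrix.cons_val_one, Matrix.head_cons,
      Matrix.cons_val_two, Matrix.tail_cons, Matrix.cons_val_three, Matrix.cons_val_four]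
    push_cast
    module
  -- N as a linear combination of (at most) single-qubit Paulis
  have hNmat : N = (1 / 4 : ℂ) • (1 : Matrix (Fin 2) (Fin 2) ℂ) +
      (1 / 12 : ℂ) • ∑ i : Fin 5, ((sv i : ℂ) * cc i * Pauli (b i) 0 0) • Pauli (a i) := by
    ext x y
    show (U * rho1 * Uᴴ) (x, 0) (y, 0) = _
    rw [hexp]
    simp only [Matrix.add_apply, Matrix.smul_apply, Matrix.sum_apply,
      Matrix.kroneckerMap_apply, Matrix.one_apply, smul_eq_mul, Prod.mk.injEq]
    congr 1
    · by_cases h : x = y <;> simp [h]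
    · rw [Finset.mul_sum, Finset.mul_sum]
      exact Finset.sum_congr rfl fun i _ => by ring
  -- the four trace formulas
  have htX : (N * PX).trace =
      (((1 / 12 : ℝ) * ∑ i : Fin 5, sv i * sg i * betaFn (b i) * xFn (a i) : ℝ) : ℂ) := by
    have hPXtr : (PX).trace = 0 := by simp [PX, Matrix.trace_fin_two]
    rw [hNmat, Matrix.add_mul, Matrix.smul_mul, Matrix.smul_mul, Matrix.one_mul,
      Finset.sum_mul, Matrix.trace_add, Matrix.trace_smul, Matrix.trace_smul,
      Matrix.trace_sum, hPXtr]
    simp only [smul_mul_assoc, Matrix.trace_smul, ltX, lB, ← hsg, smul_eq_mul, smul_zero,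
      zero_add]
    push_cast
    rw [Finset.mul_sum]
    ring
  have htY : (N * PY).trace =
      (((1 / 12 : ℝ) * ∑ i : Fin 5, sv i * sg i * betaFn (b i) * yFn (a i) : ℝ) : ℂ) := by
    have hPYtr : (PY).trace = 0 := by simp [PY, Matrix.trace_fin_two]
    rw [hNmat, Matrix.add_mul, Matrix.smul_mul, Matrix.smul_mul, Matrix.one_mul,
      Finset.sum_mul, Matrix.trace_add, Matrix.trace_smul, Matrix.trace_smul,
      Matrix.trace_sum, hPYtr]
    simp only [smul_mul_assoc, Matrix.trace_smul, ltY, lB, ← hsg, smul_eq_mul, smul_zero,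
      zero_add]
    push_cast
    rw [Finset.mul_sum]
    ring
  have htZ : (N * PZ).trace =
      (((1 / 12 : ℝ) * ∑ i : Fin 5, sv i * sg i * betaFn (b i) * zFn (a i) : ℝ) : ℂ) := by
    have hPZtr : (PZ).trace = 0 := by simp [PZ, Matrix.trace_fin_two]
    rw [hNmat, Matrix.add_mul, Matrix.smul_mul, Matrix.smul_mul, Matrix.one_mul,
      Finset.sum_mul, Matrix.trace_add, Matrix.trace_smul, Matrix.trace_smul,
      Matrix.trace_sum, hPZtr]
    simp only [smul_mul_assoc, Matrix.trace_smul, ltZ, lB, ← hsg, smul_eq_mul, smul_zero,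
      zero_add]
    push_cast
    rw [Finset.mul_sum]
    ring
  have htN : N.trace =
      (((1 / 2 : ℝ) + (1 / 12 : ℝ) * ∑ i : Fin 5, sv i * sg i * betaFn (b i) * tFn (a i) : ℝ)
        : ℂ) := by
    rw [hNmat, Matrix.trace_add, Matrix.trace_smul, Matrix.trace_smul, Matrix.trace_sum,
      Matrix.trace_one]
    simp only [Matrix.trace_smul, ltI, lB, ← hsg, smul_eq_mul]
    push_cast
    rw [Finset.mul_sum]
    norm_num
  -- set up the combinatorial data
  set e : Fin 5 → ℝ := fun i => sv i * sg i * betaFn (b i) with hedef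
  have hsv1 : ∀ i : Fin 5, sv i = 1 ∨ sv i = -1 := by
    intro i; fin_cases i <;> norm_num [sv]
  have hbeta01 : ∀ x : Fin 4, betaFn x = 0 ∨ betaFn x = 1 := by
    intro x; fin_cases x <;> norm_num [betaFn]
  have he1 : ∀ i, |e i| ≤ 1 := by
    intro i
    rw [hedef]
    simp only [abs_mul]
    have h1 : |sv i| = 1 := by rcases hsv1 i with h | h <;> rw [h] <;> norm_num
    have h2 : |sg i| = 1 := by rcases hsgv i with h | h <;> rw [h] <;> norm_num
    have h3 : |betaFn (b i)| ≤ 1 := by rcases hbeta01 (b i) with h | h <;> rw [h] <;> norm_num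
    rw [h1, h2]
    linarith
  have hbeta0 : ∀ x : Fin 4, ¬(x = 0 ∨ x = 3) → betaFn x = 0 := by
    intro x hx
    fin_cases x <;> simp_all [betaFn]
  have hbnz : ∀ i, e i ≠ 0 → (b i = 0 ∨ b i = 3) := by
    intro i hei
    by_contra hcon
    have : betaFn (b i) = 0 := hbeta0 _ hcon
    rw [hedef] at hei
    simp [this] at hei
  have hP : ∀ i j, i ≠ j → e i ≠ 0 → e j ≠ 0 → (a i = a j ∨ a i = 0 ∨ a j = 0) → False := by
    intro i j hij hei hej hA
    apply hexcl i j hij hA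
    rcases hbnz i hei with h | h
    · exact Or.inr (Or.inl h)
    · rcases hbnz j hej with h' | h'
      · exact Or.inr (Or.inr h')
      · exact Or.inl (h.trans h'.symm)
  -- convert the sums to indicator form
  have hxf : ∀ x : Fin 4, xFn x = if x = 1 then 2 else 0 := by
    intro x; fin_cases x <;> simp [xFn]
  have hyf : ∀ x : Fin 4, yFn x = if x = 2 then 2 else 0 := by
    intro x; fin_cases x <;> simp [yFn]
  have hzf : ∀ x : Fin 4, zFn x = if x = 3 then 2 else 0 := by
    intro x; fin_cases x <;> simp [zFn]
  have htf : ∀ x : Fin 4, tFn x = if x = 0 then 2 else 0 := by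
    intro x; fin_cases x <;> simp [tFn]
  have hsX : ∑ i : Fin 5, sv i * sg i * betaFn (b i) * xFn (a i)
      = 2 * ∑ i : Fin 5, (if a i = 1 then e i else 0) := by
    rw [Finset.mul_sum]
    refine Finset.sum_congr rfl fun i _ => ?_
    rw [hxf]
    by_cases h : a i = 1 <;> simp [h, hedef] <;> ring
  have hsY : ∑ i : Fin 5, sv i * sg i * betaFn (b i) * yFn (a i)
      = 2 * ∑ i : Fin 5, (if a i = 2 then e i else 0) := by
    rw [Finset.mul_sum]
    refine Finset.sum_congr rfl fun i _ => ?_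
    rw [hyf]
    by_cases h : a i = 2 <;> simp [h, hedef] <;> ring
  have hsZ : ∑ i : Fin 5, sv i * sg i * betaFn (b i) * zFn (a i)
      = 2 * ∑ i : Fin 5, (if a i = 3 then e i else 0) := by
    rw [Finset.mul_sum]
    refine Finset.sum_congr rfl fun i _ => ?_
    rw [hzf]
    by_cases h : a i = 3 <;> simp [h, hedef] <;> ring
  have hsT : ∑ i : Fin 5, sv i * sg i * betaFn (b i) * tFn (a i)
      = 2 * ∑ i : Fin 5, (if a i = 0 then e i else 0) := by
    rw [Finset.mul_sum]
    refine Finset.sum_congr rfl fun i _ => ?_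
    rw [htf]
    by_cases h : a i = 0 <;> simp [h, hedef] <;> ring
  -- finish
  rw [htX, htY, htZ, htN]
  simp only [Complex.norm_real, Real.norm_eq_abs]
  rw [Complex.real_le_real]
  rw [hsX, hsY, hsZ, hsT]
  have key := final_comb a e he1 hP
  have h112 : |(1 / 12 : ℝ)| = 1 / 12 := by norm_num
  have h2 : |(2 : ℝ)| = 2 := by norm_num
  simp only [abs_mul, h112, h2]
  linarith
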